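/- Let Ω = (a_x, b_x) × (a_y, b_y) ⊂ ℝ² and u ∈ L^1(Ω) ∩ BV(Ω). Then the function v(x) = ∫_{a_y}^{b_y} u(x,y) dy belongs to L^∞(a_x, b_x). -/

import Mathlib

open MeasureTheory Set

/-- The divergence of a vector field `ψ : ℝ² → ℝ²`. -/
noncomputable def div2 (ψ : ℝ × ℝ → ℝ × ℝ) (p : ℝ × ℝ) : ℝ :=
  (fderiv ℝ ψ p ((1 : ℝ), (0 : ℝ))).1 + (fderiv ℝ ψ p ((0 : ℝ), (1 : ℝ))).2

/-- Admissible test vector field for the 2D total variation on `Ω`. -/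
def IsTestVF (Ω : Set (ℝ × ℝ)) (ψ : ℝ × ℝ → ℝ × ℝ) : Prop :=
  ContDiff ℝ 1 ψ ∧ HasCompactSupport ψ ∧ tsupport ψ ⊆ Ω ∧ ∀ p, ‖ψ p‖ ≤ 1

/-- The total variation of `u` over `Ω ⊆ ℝ²`. -/
noncomputable def TV2 (u : ℝ × ℝ → ℝ) (Ω : Set (ℝ × ℝ)) : ℝ :=
  sSup {r : ℝ | ∃ ψ, IsTestVF Ω ψ ∧ r = ∫ p in Ω, u p * div2 ψ p}

/-- `u` has bounded variation on `Ω ⊆ ℝ²`. -/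
def BV2 (u : ℝ × ℝ → ℝ) (Ω : Set (ℝ × ℝ)) : Prop :=
  BddAbove {r : ℝ | ∃ ψ, IsTestVF Ω ψ ∧ r = ∫ p in Ω, u p * div2 ψ p}

noncomputable def sTr : ℝ → ℝ := Real.smoothTransition

lemma st_hasDerivAt (z ε t : ℝ) (hε : ε ≠ 0) :
    HasDerivAt (fun t => sTr ((t - z) / ε)) (deriv sTr ((t - z) / ε) * (1/ε)) t := by
  have h1 : HasDerivAt (fun t : ℝ => (t - z) / ε) (1/ε) t := by
    simpa using ((hasDerivAt_id t).sub_const z).div_const ε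
  have h2 : HasDerivAt sTr (deriv sTr ((t - z)/ε)) ((t - z)/ε) :=
    ((Real.smoothTransition.contDiff (n := 1)).differentiable (by norm_num) _).hasDerivAt
  exact h2.comp t h1

lemma st_deriv_eq (z ε : ℝ) (hε : ε ≠ 0) :
    deriv (fun t => sTr ((t - z) / ε)) = fun t => deriv sTr ((t - z) / ε) * (1/ε) := by
  funext t; exact (st_hasDerivAt z ε t hε).deriv

-- deriv sTr is continuous
lemma st_deriv_continuous : Continuous (deriv sTr) :=
  (Real.smoothTransition.contDiff (n := 2)).continuous_deriv (by norm_num)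

-- deriv sTr vanishes outside [0,1]
lemma st_deriv_support : Function.support (deriv sTr) ⊆ Icc 0 1 := by
  intro t ht
  by_contra h
  apply ht
  rw [mem_Icc, not_and_or, not_le, not_le] at h
  rcases h with h' | h'
  · have : ∀ᶠ s in nhds t, sTr s = 0 := by
      filter_upwards [Iio_mem_nhds h'] with s hs
      exact Real.smoothTransition.zero_of_nonpos (le_of_lt hs)
    calc deriv sTr t = deriv (fun _ => (0:ℝ)) t := Filter.EventuallyEq.deriv_eq this
      _ = 0 := deriv_const t 0
  · have : ∀ᶠ s in nhds t, sTr s = 1 := by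
      filter_upwards [Ioi_mem_nhds h'] with s hs
      exact Real.smoothTransition.one_of_one_le (le_of_lt hs)
    calc deriv sTr t = deriv (fun _ => (1:ℝ)) t := Filter.EventuallyEq.deriv_eq this
      _ = 0 := deriv_const t 1

lemma st_deriv_zero (t : ℝ) (h : t ≤ 0 ∨ 1 ≤ t) : deriv sTr t = 0 := by
  have key : ∀ s : ℝ, s < 0 ∨ 1 < s → deriv sTr s = 0 := by
    intro s hs
    by_contra h0
    have := st_deriv_support (by simpa [Function.mem_support] using h0)
    rw [mem_Icc] at this
    rcases hs with hs | hs <;> linarith [this.1, this.2]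
  rcases h with h | h
  · rcases lt_or_eq_of_le h with h | h
    · exact key t (Or.inl h)
    · subst h
      have h1 : Filter.Tendsto (deriv sTr) (nhdsWithin (0:ℝ) (Iio 0)) (nhds (deriv sTr 0)) :=
        (st_deriv_continuous.tendsto 0).mono_left nhdsWithin_le_nhds
      have h2 : Filter.Tendsto (deriv sTr) (nhdsWithin (0:ℝ) (Iio 0)) (nhds 0) := by
        apply Filter.Tendsto.congr' _ tendsto_const_nhds
        filter_upwards [self_mem_nhdsWithin] with s hs
        exact (key s (Or.inl hs)).symm
      exact tendsto_nhds_unique h1 h2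
  · rcases lt_or_eq_of_le h with h | h
    · exact key t (Or.inr h)
    · subst h
      have h1 : Filter.Tendsto (deriv sTr) (nhdsWithin (1:ℝ) (Ioi 1)) (nhds (deriv sTr 1)) :=
        (st_deriv_continuous.tendsto 1).mono_left nhdsWithin_le_nhds
      have h2 : Filter.Tendsto (deriv sTr) (nhdsWithin (1:ℝ) (Ioi 1)) (nhds 0) := by
        apply Filter.Tendsto.congr' _ tendsto_const_nhds
        filter_upwards [self_mem_nhdsWithin] with s hs
        exact (key s (Or.inr hs)).symm
      exact tendsto_nhds_unique h1 h2

lemma st_deriv_bound : ∃ K : ℝ, ∀ t, |deriv sTr t| ≤ K := by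
  obtain ⟨K, hK⟩ := (HasCompactSupport.of_support_subset_isCompact isCompact_Icc
    st_deriv_support).exists_bound_of_continuous st_deriv_continuous
  exact ⟨K, fun t => by simpa using hK t⟩

-- the kernel vanishes outside Ioo z (z+ε)
lemma kernel_zero (z ε t : ℝ) (hε : 0 < ε) (ht : t ∉ Ioo z (z + ε)) :
    deriv sTr ((t - z) / ε) * (1/ε) = 0 := by
  rw [mem_Ioo, not_and_or, not_lt, not_lt] at ht
  rcases ht with ht | ht
  · rw [st_deriv_zero _ (Or.inl (div_nonpos_of_nonpos_of_nonneg (by linarith) hε.le))]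
    ring
  · rw [st_deriv_zero _ (Or.inr ((one_le_div hε).2 (by linarith)))]
    ring

lemma kernel_integral (z ε : ℝ) (hε : 0 < ε) :
    ∫ t, deriv sTr ((t - z) / ε) * (1/ε) = 1 := by
  have hcont : Continuous fun t => deriv sTr ((t - z) / ε) * (1/ε) :=
    (st_deriv_continuous.comp (by continuity)).mul continuous_const
  have h1 : ∫ t, deriv sTr ((t - z) / ε) * (1/ε)
      = ∫ t in Ioc z (z + ε), deriv sTr ((t - z) / ε) * (1/ε) := by
    rw [setIntegral_eq_integral_of_forall_compl_eq_zero]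
    intro t ht
    exact kernel_zero z ε t hε (fun h => ht (Ioo_subset_Ioc_self h))
  rw [h1, ← intervalIntegral.integral_of_le (by linarith)]
  have := intervalIntegral.integral_eq_sub_of_hasDerivAt
    (f := fun t => sTr ((t - z) / ε)) (f' := fun t => deriv sTr ((t - z) / ε) * (1/ε))
    (a := z) (b := z + ε) (fun x _ => st_hasDerivAt z ε x hε.ne')
    (hcont.intervalIntegrable z (z+ε))
  rw [this]
  simp only [add_sub_cancel_left, sub_self, zero_div, div_self hε.ne', sTr,
    Real.smoothTransition.one, Real.smoothTransition.zero, sub_zero]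

lemma moll_est (w : ℝ → ℝ) (hw : Integrable w) (K : ℝ) (hK : ∀ t, |deriv sTr t| ≤ K)
    (z ε : ℝ) (hε : 0 < ε) :
    |(∫ t, deriv sTr ((t - z) / ε) * (1/ε) * w t) - w z|
      ≤ 2 * K * ⨍ y in Metric.closedBall z ε, |w y - w z| := by
  set k : ℝ → ℝ := fun t => deriv sTr ((t - z) / ε) * (1/ε) with hk
  have hkcont : Continuous k := (st_deriv_continuous.comp (by continuity)).mul continuous_const
  have hksupp : ∀ t, t ∉ Ioo z (z + ε) → k t = 0 := fun t ht => kernel_zero z ε t hε ht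
  have hkint : Integrable k := by
    refine Continuous.integrable_of_hasCompactSupport hkcont ?_
    exact HasCompactSupport.of_support_subset_isCompact isCompact_Icc
      (fun t ht => by
        by_contra h
        exact ht (hksupp t (fun h2 => h (Ioo_subset_Icc_self h2))))
  have hkw : Integrable (fun t => k t * w t) := by
    refine hw.bdd_mul (c := K * (1/ε)) hkcont.aestronglyMeasurable (Filter.Eventually.of_forall fun t => ?_)
    have hb : |deriv sTr ((t - z)/ε) * (1/ε)| ≤ K * (1/ε) := by
      rw [abs_mul, abs_of_pos (show (0:ℝ) < 1/ε by positivity)]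
      exact mul_le_mul_of_nonneg_right (hK _) (by positivity)
    show ‖deriv sTr ((t - z)/ε) * (1/ε)‖ ≤ K * (1/ε)
    rw [Real.norm_eq_abs]; exact hb
  have heq : (fun t => k t * (w t - w z)) = fun t => k t * w t - k t * w z := by
    funext t; ring
  have hint2 : Integrable (fun t => k t * (w t - w z)) := by
    rw [heq]; exact hkw.sub (hkint.mul_const _)
  have e1 : ∫ t, k t * (w t - w z) = (∫ t, k t * w t) - w z := by
    rw [heq, integral_sub hkw (hkint.mul_const _), integral_mul_const,
      kernel_integral z ε hε, one_mul]
  rw [← e1]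
  have hIoo_ball : Ioo z (z + ε) ⊆ Metric.closedBall z ε := by
    intro t ht
    rw [Metric.mem_closedBall, Real.dist_eq, abs_le]
    constructor <;> [linarith [ht.1]; linarith [ht.2]]
  have hKnn : 0 ≤ K := le_trans (abs_nonneg _) (hK 0)
  calc |∫ t, k t * (w t - w z)| ≤ ∫ t, |k t * (w t - w z)| :=
        by simpa only [Real.norm_eq_abs] using
          norm_integral_le_integral_norm (μ := volume) (fun t => k t * (w t - w z))
    _ = ∫ t in Metric.closedBall z ε, |k t * (w t - w z)| := by
        rw [setIntegral_eq_integral_of_forall_compl_eq_zero]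
        intro t ht
        rw [hksupp t (fun h => ht (hIoo_ball h)), zero_mul, abs_zero]
    _ ≤ ∫ t in Metric.closedBall z ε, (K * (1/ε)) * |w t - w z| := by
        refine setIntegral_mono_on ?_ ?_ measurableSet_closedBall ?_
        · exact hint2.abs.integrableOn
        · refine (((hw.integrableOn.sub (integrableOn_const ?_)).abs).const_mul _)
          exact measure_closedBall_lt_top.ne
        · intro t _
          rw [abs_mul]
          have hb : |k t| ≤ K * (1/ε) := by
            show |deriv sTr ((t - z)/ε) * (1/ε)| ≤ K * (1/ε)
            rw [abs_mul, abs_of_pos (show (0:ℝ) < 1/ε by positivity)]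
            exact mul_le_mul_of_nonneg_right (hK _) (by positivity)
          exact mul_le_mul_of_nonneg_right hb (abs_nonneg _)
    _ = (K * (1/ε)) * ∫ t in Metric.closedBall z ε, |w t - w z| := by
        rw [integral_const_mul]
    _ = 2 * K * ⨍ y in Metric.closedBall z ε, |w y - w z| := by
        rw [setAverage_eq, Real.volume_real_closedBall (by linarith),
          smul_eq_mul]
        field_simp

lemma moll_tendsto (w : ℝ → ℝ) (hw : Integrable w) (K : ℝ) (hK : ∀ t, |deriv sTr t| ≤ K)
    (z : ℝ)
    (hz : Filter.Tendsto (fun ε => ⨍ y in Metric.closedBall z ε, ‖w y - w z‖)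
      (nhdsWithin 0 (Ioi 0)) (nhds 0)) :
    Filter.Tendsto (fun ε => ∫ t, deriv sTr ((t - z) / ε) * (1/ε) * w t)
      (nhdsWithin 0 (Ioi 0)) (nhds (w z)) := by
  rw [tendsto_iff_norm_sub_tendsto_zero]
  have hKnn : 0 ≤ K := le_trans (abs_nonneg _) (hK 0)
  refine squeeze_zero' (g := fun ε => 2 * K * ⨍ y in Metric.closedBall z ε, ‖w y - w z‖) ?_ ?_ ?_
  · exact Filter.Eventually.of_forall fun ε => norm_nonneg _
  · filter_upwards [self_mem_nhdsWithin] with ε hε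
    have := moll_est w hw K hK z ε (mem_Ioi.1 hε)
    simpa [Real.norm_eq_abs] using this
  · have := hz.const_mul (2 * K)
    simpa using this

lemma ae_moll (w : ℝ → ℝ) (hw : Integrable w) :
    ∀ᵐ z : ℝ, Filter.Tendsto (fun ε => ∫ t, deriv sTr ((t - z) / ε) * (1/ε) * w t)
      (nhdsWithin 0 (Ioi 0)) (nhds (w z)) := by
  obtain ⟨K, hK⟩ := st_deriv_bound
  filter_upwards [IsUnifLocDoublingMeasure.ae_tendsto_average_norm_sub (volume : Measure ℝ)
    hw.locallyIntegrable 1] with z hz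
  refine moll_tendsto w hw K hK z ?_
  exact hz (fun _ => z) id Filter.tendsto_id (by
    filter_upwards [self_mem_nhdsWithin] with ε hε
    simpa [Metric.mem_closedBall] using le_of_lt (mem_Ioi.1 hε))

noncomputable def etaN (ay bY : ℝ) (n : ℕ) (y : ℝ) : ℝ :=
  sTr ((y - ay) * (n + 1) - 1) * sTr ((bY - y) * (n + 1) - 1)

lemma etaN_contDiff (ay bY : ℝ) (n : ℕ) : ContDiff ℝ 1 (etaN ay bY n) := by
  unfold etaN
  exact ((Real.smoothTransition.contDiff.comp (by fun_prop)).mul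
    (Real.smoothTransition.contDiff.comp (by fun_prop)))

lemma etaN_supp (ay bY : ℝ) (n : ℕ) :
    Function.support (etaN ay bY n) ⊆ Icc (ay + 1/(n+1)) (bY - 1/(n+1)) := by
  intro y hy
  rw [Function.mem_support] at hy
  have h1 : sTr ((y - ay) * (n + 1) - 1) ≠ 0 := left_ne_zero_of_mul hy
  have h2 : sTr ((bY - y) * (n + 1) - 1) ≠ 0 := right_ne_zero_of_mul hy
  have hn : (0:ℝ) < n + 1 := by positivity
  have g1 : ¬((y - ay) * (n + 1) - 1 ≤ 0) := fun h =>
    h1 (Real.smoothTransition.zero_of_nonpos h)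
  have g2 : ¬((bY - y) * (n + 1) - 1 ≤ 0) := fun h =>
    h2 (Real.smoothTransition.zero_of_nonpos h)
  push_neg at g1 g2
  constructor
  · have h3 : 1/(n+1:ℝ) < y - ay := by rw [div_lt_iff₀ hn]; nlinarith
    linarith
  · have h3 : 1/(n+1:ℝ) < bY - y := by rw [div_lt_iff₀ hn]; nlinarith
    linarith

lemma etaN_bound (ay bY : ℝ) (n : ℕ) (y : ℝ) : |etaN ay bY n y| ≤ 1 := by
  unfold etaN sTr
  rw [abs_mul, abs_of_nonneg (Real.smoothTransition.nonneg _),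
    abs_of_nonneg (Real.smoothTransition.nonneg _)]
  exact mul_le_one₀ (Real.smoothTransition.le_one _) (Real.smoothTransition.nonneg _)
    (Real.smoothTransition.le_one _)

lemma etaN_tendsto (ay bY : ℝ) (y : ℝ) (hy : y ∈ Ioo ay bY) :
    Filter.Tendsto (fun n => etaN ay bY n y) Filter.atTop (nhds 1) := by
  refine Filter.Tendsto.congr' ?_ tendsto_const_nhds
  obtain ⟨N, hN⟩ := exists_nat_gt (max (2/(y - ay)) (2/(bY - y)))
  rw [Filter.EventuallyEq, Filter.eventually_atTop]
  refine ⟨N, fun n hn => ?_⟩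
  have hy1 : 0 < y - ay := by linarith [hy.1]
  have hy2 : 0 < bY - y := by linarith [hy.2]
  have hNn : (N:ℝ) ≤ n := Nat.cast_le.2 hn
  have e1 : (1:ℝ) ≤ (y - ay) * (n + 1) - 1 := by
    have : 2/(y - ay) < (n:ℝ) + 1 := by
      calc 2/(y-ay) ≤ max (2/(y - ay)) (2/(bY - y)) := le_max_left _ _
        _ < N := hN
        _ ≤ (n:ℝ) + 1 := by linarith
    rw [div_lt_iff₀ hy1] at this
    nlinarith
  have e2 : (1:ℝ) ≤ (bY - y) * (n + 1) - 1 := by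
    have : 2/(bY - y) < (n:ℝ) + 1 := by
      calc 2/(bY-y) ≤ max (2/(y - ay)) (2/(bY - y)) := le_max_right _ _
        _ < N := hN
        _ ≤ (n:ℝ) + 1 := by linarith
    rw [div_lt_iff₀ hy2] at this
    nlinarith
  show (1:ℝ) = etaN ay bY n y
  unfold etaN sTr
  rw [Real.smoothTransition.one_of_one_le e1, Real.smoothTransition.one_of_one_le e2, one_mul]

section Phi
variable (ax bx z₁ z₂ ε : ℝ)

noncomputable def phiF (z₁ z₂ ε : ℝ) (t : ℝ) : ℝ := sTr ((t - z₁)/ε) - sTr ((t - z₂)/ε)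

lemma phiF_contDiff : ContDiff ℝ 1 (phiF z₁ z₂ ε) := by
  unfold phiF sTr
  have hlin : ∀ z : ℝ, ContDiff ℝ 1 (fun t : ℝ => (t - z)/ε) := fun z =>
    (contDiff_id.sub contDiff_const).div_const ε
  exact (Real.smoothTransition.contDiff.comp (hlin z₁)).sub
    (Real.smoothTransition.contDiff.comp (hlin z₂))

lemma phiF_deriv (hε : 0 < ε) (t : ℝ) :
    deriv (phiF z₁ z₂ ε) t
      = deriv sTr ((t - z₁)/ε) * (1/ε) - deriv sTr ((t - z₂)/ε) * (1/ε) :=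
  ((st_hasDerivAt z₁ ε t hε.ne').sub (st_hasDerivAt z₂ ε t hε.ne')).deriv

lemma phiF_bound (t : ℝ) : |phiF z₁ z₂ ε t| ≤ 1 := by
  unfold phiF sTr
  rw [abs_sub_le_iff]
  constructor <;>
    [linarith [Real.smoothTransition.le_one ((t - z₁)/ε), Real.smoothTransition.nonneg ((t - z₂)/ε)];
     linarith [Real.smoothTransition.le_one ((t - z₂)/ε), Real.smoothTransition.nonneg ((t - z₁)/ε)]]

lemma phiF_supp (hε : 0 < ε) :
    Function.support (phiF z₁ z₂ ε) ⊆ Icc (min z₁ z₂) (max z₁ z₂ + ε) := by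
  intro t ht
  rw [Function.mem_support] at ht
  by_contra h
  apply ht
  rw [mem_Icc, not_and_or, not_le, not_le] at h
  unfold phiF sTr
  rcases h with h | h
  · have h1 : t < z₁ := lt_of_lt_of_le h (min_le_left _ _)
    have h2 : t < z₂ := lt_of_lt_of_le h (min_le_right _ _)
    rw [Real.smoothTransition.zero_of_nonpos (div_nonpos_of_nonpos_of_nonneg (by linarith) hε.le),
      Real.smoothTransition.zero_of_nonpos (div_nonpos_of_nonpos_of_nonneg (by linarith) hε.le),
      sub_zero]
  · have h1 : z₁ + ε < t := lt_of_le_of_lt (by simpa using add_le_add_right (le_max_left z₁ z₂) ε) h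
    have h2 : z₂ + ε < t := lt_of_le_of_lt (by simpa using add_le_add_right (le_max_right z₁ z₂) ε) h
    rw [Real.smoothTransition.one_of_one_le ((one_le_div hε).2 (by linarith)),
      Real.smoothTransition.one_of_one_le ((one_le_div hε).2 (by linarith)), sub_self]

lemma phiF_hcs (hε : 0 < ε) : HasCompactSupport (phiF z₁ z₂ ε) :=
  HasCompactSupport.of_support_subset_isCompact isCompact_Icc (phiF_supp z₁ z₂ ε hε)

lemma phiF_tsupp (hε : 0 < ε) (h1 : ax < z₁) (h2 : ax < z₂)
    (hb1 : z₁ + ε < bx) (hb2 : z₂ + ε < bx) :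
    tsupport (phiF z₁ z₂ ε) ⊆ Ioo ax bx := by
  refine (closure_minimal (phiF_supp z₁ z₂ ε hε) isClosed_Icc).trans ?_
  intro t ht
  rw [mem_Icc] at ht
  constructor
  · calc ax < min z₁ z₂ := lt_min h1 h2
      _ ≤ t := ht.1
  · calc t ≤ max z₁ z₂ + ε := ht.2
      _ < bx := by rcases max_cases z₁ z₂ with ⟨h,_⟩|⟨h,_⟩ <;> rw [h] <;> linarith
end Phi

lemma kernel_mul_int (w : ℝ → ℝ) (hw : Integrable w) (K : ℝ) (hK : ∀ t, |deriv sTr t| ≤ K)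
    (z ε : ℝ) (hε : 0 < ε) :
    Integrable (fun t => deriv sTr ((t - z) / ε) * (1/ε) * w t) := by
  have hkcont : Continuous fun t : ℝ => deriv sTr ((t - z) / ε) * (1/ε) :=
    (st_deriv_continuous.comp (by continuity)).mul continuous_const
  refine hw.bdd_mul (c := K * (1/ε)) hkcont.aestronglyMeasurable (Filter.Eventually.of_forall fun t => ?_)
  show ‖deriv sTr ((t - z)/ε) * (1/ε)‖ ≤ K * (1/ε)
  rw [Real.norm_eq_abs, abs_mul, abs_of_pos (show (0:ℝ) < 1/ε by positivity)]
  exact mul_le_mul_of_nonneg_right (hK _) (by positivity)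

lemma div2_prod (φ η : ℝ → ℝ) (hφ : ContDiff ℝ 1 φ) (hη : ContDiff ℝ 1 η) (p : ℝ × ℝ) :
    div2 (fun p => (φ p.1 * η p.2, 0)) p = deriv φ p.1 * η p.2 := by
  have h1 : HasFDerivAt (fun q : ℝ × ℝ => φ q.1)
      ((deriv φ p.1) • (ContinuousLinearMap.fst ℝ ℝ ℝ)) p :=
    (hφ.differentiable (by norm_num) p.1).hasDerivAt.comp_hasFDerivAt p (hasFDerivAt_fst)
  have h2 : HasFDerivAt (fun q : ℝ × ℝ => η q.2)
      ((deriv η p.2) • (ContinuousLinearMap.snd ℝ ℝ ℝ)) p :=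
    (hη.differentiable (by norm_num) p.2).hasDerivAt.comp_hasFDerivAt p (hasFDerivAt_snd)
  have h4 := (h1.mul h2).prodMk (hasFDerivAt_const (0:ℝ) p)
  have h5 : fderiv ℝ (fun p : ℝ × ℝ => (φ p.1 * η p.2, (0:ℝ))) p = _ := h4.fderiv
  rw [div2, h5]
  simp [ContinuousLinearMap.smul_apply]
  ring

lemma mk_testVF (ax bx ay bY : ℝ) (φ η : ℝ → ℝ) (hφ : ContDiff ℝ 1 φ) (hη : ContDiff ℝ 1 η)
    (hφs : HasCompactSupport φ) (hηs : HasCompactSupport η)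
    (hφt : tsupport φ ⊆ Ioo ax bx) (hηt : tsupport η ⊆ Ioo ay bY)
    (hφb : ∀ t, |φ t| ≤ 1) (hηb : ∀ t, |η t| ≤ 1) :
    IsTestVF (Ioo ax bx ×ˢ Ioo ay bY) (fun p => (φ p.1 * η p.2, 0)) := by
  have hsub : Function.support (fun p : ℝ × ℝ => (φ p.1 * η p.2, (0:ℝ)))
      ⊆ Function.support φ ×ˢ Function.support η := by
    intro p hp
    simp only [Function.mem_support, Prod.mk.injEq, ne_eq] at hp
    have : φ p.1 * η p.2 ≠ 0 := fun h => hp (by simp [h])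
    exact ⟨left_ne_zero_of_mul this, right_ne_zero_of_mul this⟩
  have hts : tsupport (fun p : ℝ × ℝ => (φ p.1 * η p.2, (0:ℝ))) ⊆ tsupport φ ×ˢ tsupport η := by
    refine (closure_mono hsub).trans ?_
    rw [closure_prod_eq]
    exact subset_rfl
  refine ⟨?_, ?_, ?_, ?_⟩
  · exact ((hφ.comp contDiff_fst).mul (hη.comp contDiff_snd)).prodMk contDiff_const
  · exact HasCompactSupport.of_support_subset_isCompact (hφs.prod hηs)
      (hsub.trans (prod_mono (subset_tsupport φ) (subset_tsupport η)))
  · exact hts.trans (prod_mono hφt hηt)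
  · intro p
    rw [Prod.norm_def]
    simp only [norm_zero]
    refine max_le ?_ (by norm_num)
    rw [Real.norm_eq_abs, abs_mul]
    exact mul_le_one₀ (hφb p.1) (abs_nonneg _) (hηb p.2)

lemma div2_neg (ψ : ℝ × ℝ → ℝ × ℝ) (p : ℝ × ℝ) : div2 (fun q => -(ψ q)) p = -div2 ψ p := by
  rw [div2, div2, fderiv_fun_neg]
  simp
  ring

lemma neg_mem_testSet (Ω : Set (ℝ × ℝ)) (u : ℝ × ℝ → ℝ) (r : ℝ)
    (h : r ∈ {r : ℝ | ∃ ψ, IsTestVF Ω ψ ∧ r = ∫ p in Ω, u p * div2 ψ p}) :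
    -r ∈ {r : ℝ | ∃ ψ, IsTestVF Ω ψ ∧ r = ∫ p in Ω, u p * div2 ψ p} := by
  obtain ⟨ψ, ⟨hc, hs, ht, hb⟩, hr⟩ := h
  refine ⟨fun q => -(ψ q), ⟨hc.neg, hs.neg, ?_, fun p => by simpa using hb p⟩, ?_⟩
  · have : tsupport (fun q => -(ψ q)) = tsupport ψ := by
      unfold tsupport
      rw [Function.support_fun_neg ψ]
    rwa [this]
  · rw [hr, ← integral_neg]
    refine integral_congr_ae (Filter.Eventually.of_forall fun p => ?_)
    have := div2_neg ψ p
    simp only at this ⊢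
    rw [this]
    ring

/-- For `u ∈ L¹ ∩ BV` on the rectangle `Ω = (ax, bx) × (ay, by)`, the slice-integrated
function `v(x) = ∫ u(x, y) dy` is essentially bounded on `(ax, bx)`. -/
theorem stmt3 (ax bx ay bY : ℝ) (hx : ax < bx) (hy : ay < bY)
    (Ω : Set (ℝ × ℝ)) (hΩ : Ω = Ioo ax bx ×ˢ Ioo ay bY)
    (u : ℝ × ℝ → ℝ) (hu1 : IntegrableOn u Ω) (huBV : BV2 u Ω)
    (v : ℝ → ℝ) (hv : ∀ x, v x = ∫ y in Ioo ay bY, u (x, y)) :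
    MemLp v ⊤ (volume.restrict (Ioo ax bx)) := by
  obtain ⟨M, hM⟩ := huBV
  have hmem : ∀ ψ, IsTestVF Ω ψ → |∫ p in Ω, u p * div2 ψ p| ≤ M := by
    intro ψ hψ
    have h1 : (∫ p in Ω, u p * div2 ψ p) ≤ M := hM ⟨ψ, hψ, rfl⟩
    have h2 : -(∫ p in Ω, u p * div2 ψ p) ≤ M := hM (neg_mem_testSet Ω u _ ⟨ψ, hψ, rfl⟩)
    exact abs_le.2 ⟨by linarith, h1⟩
  subst hΩ
  obtain ⟨K, hK⟩ := st_deriv_bound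
  -- integrability of v
  have hprod : volume.restrict (Ioo ax bx ×ˢ Ioo ay bY)
      = (volume.restrict (Ioo ax bx)).prod (volume.restrict (Ioo ay bY)) := by
    rw [MeasureTheory.Measure.volume_eq_prod, Measure.prod_restrict]
  have hu1' : Integrable u ((volume.restrict (Ioo ax bx)).prod (volume.restrict (Ioo ay bY))) := by
    rw [← hprod]; exact hu1
  have hvint : Integrable v (volume.restrict (Ioo ax bx)) := by
    have heqv : v = fun x => ∫ y, u (x, y) ∂(volume.restrict (Ioo ay bY)) :=
      funext fun x => hv x
    rw [heqv]
    exact hu1'.integral_prod_left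
  set w : ℝ → ℝ := (Ioo ax bx).indicator v with hw
  have hwint : Integrable w := (integrable_indicator_iff measurableSet_Ioo).2 hvint
  set g : ℝ → ℝ → ℝ := fun ε z => ∫ t, deriv sTr ((t - z) / ε) * (1/ε) * w t with hg
  -- key variation estimate
  have key : ∀ z₁ ∈ Ioo ax bx, ∀ z₂ ∈ Ioo ax bx, ∀ ε : ℝ, 0 < ε → z₁ + ε < bx → z₂ + ε < bx →
      |g ε z₁ - g ε z₂| ≤ M := by
    intro z₁ hz₁ z₂ hz₂ ε hε hb₁ hb₂
    set φ : ℝ → ℝ := phiF z₁ z₂ ε with hφ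
    have hφc : ContDiff ℝ 1 φ := phiF_contDiff z₁ z₂ ε
    have hφdc : Continuous (deriv φ) := hφc.continuous_deriv le_rfl
    have hKφ : ∀ t, |deriv φ t| ≤ 2 * K * (1/ε) := by
      intro t
      rw [hφ, phiF_deriv z₁ z₂ ε hε t]
      have h1 : |deriv sTr ((t - z₁)/ε) * (1/ε)| ≤ K * (1/ε) := by
        rw [abs_mul, abs_of_pos (show (0:ℝ) < 1/ε by positivity)]
        exact mul_le_mul_of_nonneg_right (hK _) (by positivity)
      have h2 : |deriv sTr ((t - z₂)/ε) * (1/ε)| ≤ K * (1/ε) := by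
        rw [abs_mul, abs_of_pos (show (0:ℝ) < 1/ε by positivity)]
        exact mul_le_mul_of_nonneg_right (hK _) (by positivity)
      calc |deriv sTr ((t - z₁)/ε) * (1/ε) - deriv sTr ((t - z₂)/ε) * (1/ε)|
          ≤ |deriv sTr ((t - z₁)/ε) * (1/ε)| + |deriv sTr ((t - z₂)/ε) * (1/ε)| := abs_sub _ _
        _ ≤ K * (1/ε) + K * (1/ε) := add_le_add h1 h2
        _ = 2 * K * (1/ε) := by ring
    have hηt : ∀ n : ℕ, tsupport (etaN ay bY n) ⊆ Ioo ay bY := by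
      intro n
      refine (closure_minimal (etaN_supp ay bY n) isClosed_Icc).trans ?_
      intro y hy
      rw [mem_Icc] at hy
      have hn : 0 < 1/((n:ℝ)+1) := by positivity
      exact ⟨by linarith [hy.1], by linarith [hy.2]⟩
    have hTVF : ∀ n : ℕ, IsTestVF (Ioo ax bx ×ˢ Ioo ay bY)
        (fun p => (φ p.1 * etaN ay bY n p.2, 0)) := fun n =>
      mk_testVF ax bx ay bY φ (etaN ay bY n) hφc (etaN_contDiff ay bY n)
        (phiF_hcs z₁ z₂ ε hε)
        (HasCompactSupport.of_support_subset_isCompact isCompact_Icc (etaN_supp ay bY n))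
        (phiF_tsupp ax bx z₁ z₂ ε hε hz₁.1 hz₂.1 hb₁ hb₂) (hηt n)
        (phiF_bound z₁ z₂ ε) (etaN_bound ay bY n)
    have hrM : ∀ n : ℕ,
        |∫ p in Ioo ax bx ×ˢ Ioo ay bY, u p * (deriv φ p.1 * etaN ay bY n p.2)| ≤ M := by
      intro n
      have heq : ∫ p in Ioo ax bx ×ˢ Ioo ay bY, u p * (deriv φ p.1 * etaN ay bY n p.2)
          = ∫ p in Ioo ax bx ×ˢ Ioo ay bY, u p * div2 (fun p => (φ p.1 * etaN ay bY n p.2, 0)) p :=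
        integral_congr_ae (Filter.Eventually.of_forall fun p => by
          simp only
          rw [div2_prod φ (etaN ay bY n) hφc (etaN_contDiff ay bY n) p])
      rw [heq]
      exact hmem _ (hTVF n)
    have hlim : Filter.Tendsto
        (fun n : ℕ => ∫ p in Ioo ax bx ×ˢ Ioo ay bY, u p * (deriv φ p.1 * etaN ay bY n p.2))
        Filter.atTop (nhds (∫ p in Ioo ax bx ×ˢ Ioo ay bY, u p * deriv φ p.1)) := by
      refine tendsto_integral_of_dominated_convergence
        (fun p => ‖u p‖ * (2 * K * (1/ε))) ?_ ?_ ?_ ?_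
      · intro n
        refine hu1.aestronglyMeasurable.mul ?_
        exact ((hφdc.comp continuous_fst).mul
          ((etaN_contDiff ay bY n).continuous.comp continuous_snd)).aestronglyMeasurable
      · exact hu1.norm.mul_const _
      · intro n
        refine Filter.Eventually.of_forall fun p => ?_
        rw [Real.norm_eq_abs, abs_mul, ← Real.norm_eq_abs (u p)]
        refine mul_le_mul_of_nonneg_left ?_ (norm_nonneg _)
        rw [abs_mul]
        calc |deriv φ p.1| * |etaN ay bY n p.2| ≤ (2 * K * (1/ε)) * 1 :=
              mul_le_mul (hKφ p.1) (etaN_bound ay bY n p.2) (abs_nonneg _)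
                (le_trans (abs_nonneg _) (hKφ p.1))
          _ = 2 * K * (1/ε) := mul_one _
      · rw [ae_restrict_iff' (measurableSet_Ioo.prod measurableSet_Ioo)]
        refine Filter.Eventually.of_forall fun p hp => ?_
        have h1 := (etaN_tendsto ay bY p.2 hp.2).const_mul (deriv φ p.1)
        have h2 := h1.const_mul (u p)
        simpa [mul_one] using h2
    have hM1 : |∫ p in Ioo ax bx ×ˢ Ioo ay bY, u p * deriv φ p.1| ≤ M := by
      have habs : Filter.Tendsto
          (fun n : ℕ => |∫ p in Ioo ax bx ×ˢ Ioo ay bY, u p * (deriv φ p.1 * etaN ay bY n p.2)|)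
          Filter.atTop (nhds |∫ p in Ioo ax bx ×ˢ Ioo ay bY, u p * deriv φ p.1|) :=
        hlim.abs
      exact le_of_tendsto habs (Filter.Eventually.of_forall hrM)
    -- Fubini
    have hintp : Integrable (fun p : ℝ × ℝ => u p * deriv φ p.1)
        ((volume.restrict (Ioo ax bx)).prod (volume.restrict (Ioo ay bY))) := by
      have := hu1'.bdd_mul (c := 2 * K * (1/ε)) ((hφdc.comp continuous_fst)).aestronglyMeasurable
        (Filter.Eventually.of_forall fun p => by
          rw [Real.norm_eq_abs]; exact hKφ p.1)
      exact this.congr (Filter.Eventually.of_forall fun p => mul_comm _ _)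
    have hFub : ∫ p in Ioo ax bx ×ˢ Ioo ay bY, u p * deriv φ p.1
        = ∫ x in Ioo ax bx, deriv φ x * v x := by
      calc ∫ p in Ioo ax bx ×ˢ Ioo ay bY, u p * deriv φ p.1
          = ∫ p, u p * deriv φ p.1
            ∂((volume.restrict (Ioo ax bx)).prod (volume.restrict (Ioo ay bY))) := by
            rw [← hprod]
        _ = ∫ x, (∫ y, u (x, y) * deriv φ x ∂(volume.restrict (Ioo ay bY)))
            ∂(volume.restrict (Ioo ax bx)) := integral_prod _ hintp
        _ = ∫ x in Ioo ax bx, deriv φ x * v x := by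
            refine integral_congr_ae (Filter.Eventually.of_forall fun x => ?_)
            simp only
            rw [integral_mul_const, ← hv x]
            exact mul_comm _ _
    have hIv : ∫ x in Ioo ax bx, deriv φ x * v x = ∫ x, deriv φ x * w x := by
      calc ∫ x in Ioo ax bx, deriv φ x * v x = ∫ x in Ioo ax bx, deriv φ x * w x :=
            setIntegral_congr_fun measurableSet_Ioo
              (fun x hx => by rw [hw, indicator_of_mem hx])
        _ = ∫ x, deriv φ x * w x :=
            setIntegral_eq_integral_of_forall_compl_eq_zero
              (fun x hx => by rw [hw, indicator_of_notMem hx, mul_zero])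
    have hsplit : ∫ x, deriv φ x * w x = g ε z₁ - g ε z₂ := by
      have heq2 : (fun x => deriv φ x * w x)
          = fun x => deriv sTr ((x - z₁)/ε) * (1/ε) * w x
            - deriv sTr ((x - z₂)/ε) * (1/ε) * w x := by
        funext x
        rw [hφ, phiF_deriv z₁ z₂ ε hε x]
        ring
      rw [heq2, integral_sub (kernel_mul_int w hwint K hK z₁ ε hε)
        (kernel_mul_int w hwint K hK z₂ ε hε)]
    calc |g ε z₁ - g ε z₂| = |∫ p in Ioo ax bx ×ˢ Ioo ay bY, u p * deriv φ p.1| := by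
          rw [hFub, hIv, hsplit]
      _ ≤ M := hM1
  -- Lebesgue points
  have hae := ae_moll w hwint
  have hIne : volume (Ioo ax bx) ≠ 0 := by
    rw [Real.volume_Ioo]
    simp only [ne_eq, ENNReal.ofReal_eq_zero, not_le]
    linarith
  obtain ⟨c, hcI, hc⟩ : ∃ c ∈ Ioo ax bx, Filter.Tendsto (fun ε => g ε c)
      (nhdsWithin 0 (Ioi 0)) (nhds (w c)) := by
    by_contra hcon
    push_neg at hcon
    refine hIne (measure_mono_null (fun z hz => ?_) (ae_iff.1 hae))
    exact hcon z hz
  refine memLp_top_of_bound hvint.aestronglyMeasurable (M + |w c|) ?_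
  rw [ae_restrict_iff' measurableSet_Ioo]
  filter_upwards [hae] with z hz
  intro hzI
  have hbound : |w z - w c| ≤ M := by
    have h1 : 0 < bx - z := by linarith [hzI.2]
    have h2 : 0 < bx - c := by linarith [hcI.2]
    have hev : ∀ᶠ ε in nhdsWithin (0:ℝ) (Ioi 0), |g ε z - g ε c| ≤ M := by
      filter_upwards [Ioo_mem_nhdsGT_of_mem
        (show (0:ℝ) ∈ Ico 0 (min (bx - z) (bx - c)) from ⟨le_rfl, by positivity⟩)] with ε hε
      exact key z hzI c hcI ε hε.1
        (by have := lt_of_lt_of_le hε.2 (min_le_left _ _); linarith)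
        (by have := lt_of_lt_of_le hε.2 (min_le_right _ _); linarith)
    exact le_of_tendsto ((hz.sub hc).abs) hev
  have hwz : w z = v z := indicator_of_mem hzI v
  rw [Real.norm_eq_abs, ← hwz]
  have := abs_sub_abs_le_abs_sub (w z) (w c)
  linarith
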